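/- Let M be a matroid on a finite ground set E and let I be a modular ideal of M. Then for every S ⊆ E, S ∈ I if and only if S is independent in M, or there exists a basis B of S in M (a maximal independent subset B ⊆ S) such that for every s ∈ S \ B the fundamental circuit C_B(s) — the unique circuit of M contained in B ∪ {s} and containing s — belongs to I. -/

import Mathlib

open Set

/-- The rank of a set `S` in a matroid `M`: the largest cardinality of an independent
subset of `S`. -/
noncomputable def Matroid.rk' {α : Type*} (M : Matroid α) (S : Set α) : ℕ :=
  sSup (Set.ncard '' {I : Set α | M.Indep I ∧ I ⊆ S})

/-- A circuit of `M`: a minimal dependent set, i.e. a dependent set all of whose proper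
subsets are independent. -/
def Matroid.IsCircuit' {α : Type*} (M : Matroid α) (C : Set α) : Prop :=
  M.Dep C ∧ ∀ D : Set α, D ⊂ C → M.Indep D

/-- `S` and `T` form a modular pair in `M`: `rk(S ∩ T) + rk(S ∪ T) = rk S + rk T`. -/
def Matroid.ModularPairSets {α : Type*} (M : Matroid α) (S T : Set α) : Prop :=
  M.rk' (S ∩ T) + M.rk' (S ∪ T) = M.rk' S + M.rk' T

/-- A modular ideal of `M`: a nonempty downward-closed family of subsets containing `{e}`
for every non-loop `e` and closed under unions of modular pairs. -/
def Matroid.ModularIdeal {α : Type*} (M : Matroid α) (I : Set (Set α)) : Prop :=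
  I.Nonempty ∧ (∀ A B : Set α, A ⊆ B → B ∈ I → A ∈ I) ∧
    (∀ e : α, M.Indep {e} → {e} ∈ I) ∧
    (∀ A B : Set α, A ∈ I → B ∈ I → M.ModularPairSets A B → A ∪ B ∈ I)

/-- A linear class of circuits of `M`: a set `L` of circuits such that whenever
`X, Y ∈ L` form a modular pair, every circuit `Z ⊆ X ∪ Y` belongs to `L`. -/
def Matroid.LinearClass {α : Type*} (M : Matroid α) (L : Set (Set α)) : Prop :=
  (∀ C ∈ L, M.IsCircuit' C) ∧
    ∀ X ∈ L, ∀ Y ∈ L, M.ModularPairSets X Y →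
      ∀ Z : Set α, M.IsCircuit' Z → Z ⊆ X ∪ Y → Z ∈ L

lemma rk'_eq_of_basis {α : Type*} [Fintype α] {M : Matroid α} {B S : Set α}
    (h : M.IsBasis B S) : M.rk' S = B.ncard := by
  apply le_antisymm
  · refine csSup_le ⟨0, ∅, ⟨M.empty_indep, empty_subset _⟩, by simp⟩ ?_
    rintro n ⟨J, ⟨hJ, hJS⟩, rfl⟩
    obtain ⟨B', hB', hJB'⟩ := hJ.subset_isBasis_of_subset hJS h.subset_ground
    have hcard : B'.encard = B.encard := hB'.isBasis'.encard_eq_encard h.isBasis'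
    have h1 : J.ncard ≤ B'.ncard := Set.ncard_le_ncard hJB' B'.toFinite
    have h2 : B'.ncard = B.ncard := by
      rw [Set.ncard_def, Set.ncard_def, hcard]
    omega
  · apply le_csSup
    · refine ⟨Fintype.card α, ?_⟩
      rintro n ⟨J, _, rfl⟩
      have := Set.ncard_le_ncard (subset_univ J) finite_univ
      simpa [Set.ncard_univ, Nat.card_eq_fintype_card] using this
    · exact ⟨B, ⟨h.indep, h.subset⟩, rfl⟩

lemma rk'_eq_of_indep {α : Type*} [Fintype α] {M : Matroid α} {S : Set α}
    (h : M.Indep S) : M.rk' S = S.ncard := rk'_eq_of_basis h.isBasis_self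

lemma indep_mem_modularIdeal {α : Type*} [Fintype α] {M : Matroid α} {I : Set (Set α)}
    (hI : M.ModularIdeal I) {A : Set α} (hA : M.Indep A) : A ∈ I := by
  obtain ⟨hne, hdown, hsing, hunion⟩ := hI
  obtain ⟨T, hT⟩ := hne
  have hemp : (∅ : Set α) ∈ I := hdown ∅ T (empty_subset T) hT
  refine Set.Finite.induction_on (motive := fun A _ => M.Indep A → A ∈ I) A A.toFinite
    (fun _ => hemp) ?_ hA
  clear hA
  intro e A heA hAfin ih hA
  have hA' : M.Indep A := hA.subset (subset_insert e A)
  have he : M.Indep {e} := hA.subset (by simp)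
  have hpair : M.ModularPairSets A {e} := by
    have h1 : A ∩ {e} = ∅ := by
      ext x; simp only [mem_inter_iff, mem_singleton_iff, mem_empty_iff_false, iff_false]
      rintro ⟨hx, rfl⟩; exact heA hx
    have h2 : A ∪ {e} = insert e A := by rw [union_singleton]
    unfold Matroid.ModularPairSets
    rw [h1, h2, rk'_eq_of_indep hA, rk'_eq_of_indep hA', rk'_eq_of_indep he,
      rk'_eq_of_indep M.empty_indep, Set.ncard_insert_of_notMem heA hAfin]
    simp
  have := hunion A {e} (ih hA') (hsing e he) hpair
  rwa [union_singleton] at this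

lemma exists_circuit'_subset {α : Type*} [Fintype α] {M : Matroid α} {X : Set α}
    (hX : M.Dep X) : ∃ C, M.IsCircuit' C ∧ C ⊆ X := by
  classical
  set s : Set ℕ := {n | ∃ D, D ⊆ X ∧ M.Dep D ∧ D.ncard = n} with hs
  have hne : s.Nonempty := ⟨X.ncard, X, Subset.rfl, hX, rfl⟩
  obtain ⟨C, hCX, hCdep, hCcard⟩ : ∃ D, D ⊆ X ∧ M.Dep D ∧ D.ncard = sInf s :=
    Nat.sInf_mem hne
  refine ⟨C, ⟨hCdep, ?_⟩, hCX⟩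
  intro D hD
  by_contra hDind
  have hDdep : M.Dep D := ⟨hDind, hD.subset.trans hCdep.subset_ground⟩
  have hmem : D.ncard ∈ s := ⟨D, hD.subset.trans hCX, hDdep, rfl⟩
  have hlt : D.ncard < C.ncard := Set.ncard_lt_ncard hD C.toFinite
  have := Nat.sInf_le hmem
  omega

/-- A set `S` belongs to a modular ideal `I` iff `S` is independent or there is a basis
`B` of `S` all of whose fundamental circuits `C_B(s)`, `s ∈ S \ B`, belong to `I`. -/
theorem mem_modularIdeal_iff_exists_basis
    {α : Type*} [Fintype α] (M : Matroid α) (hE : M.E = Set.univ)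
    (I : Set (Set α)) (hI : M.ModularIdeal I) (S : Set α) :
    S ∈ I ↔
      (M.Indep S ∨
        ∃ B : Set α, M.IsBasis B S ∧
          ∀ s ∈ S \ B, ∀ C : Set α,
            M.IsCircuit' C → s ∈ C → C ⊆ B ∪ {s} → C ∈ I) := by
  have hSE : S ⊆ M.E := by rw [hE]; exact subset_univ S
  constructor
  · intro hS
    right
    obtain ⟨B, hB⟩ := M.exists_isBasis S hSE
    refine ⟨B, hB, fun s hs C _ _ hCsub => ?_⟩
    exact hI.2.1 C S (hCsub.trans (union_subset hB.subset
      (singleton_subset_iff.2 hs.1))) hS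
  · rintro (hind | ⟨B, hB, hfc⟩)
    · exact indep_mem_modularIdeal hI hind
    have key : ∀ F : Set α, F ⊆ S \ B → B ∪ F ∈ I := by
      intro F
      refine Set.Finite.induction_on_subset (motive := fun F _ => F ⊆ S \ B → B ∪ F ∈ I)
        F F.toFinite (fun _ => by
          rw [union_empty]; exact indep_mem_modularIdeal hI hB.indep) ?_
      intro s F _ hFsub hsF ih hins
      have hsSB : s ∈ S \ B := hins (mem_insert s F)
      have hFsub' : F ⊆ S \ B := (subset_insert s F).trans hins
      have hXI : B ∪ F ∈ I := ih hFsub'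
      -- get a circuit
      have hdep : M.Dep (insert s B) := hB.insert_dep hsSB
      obtain ⟨C, hC, hCsub⟩ := exists_circuit'_subset hdep
      have hsC : s ∈ C := by
        by_contra hsC
        exact hC.1.not_indep (hB.indep.subset fun x hx =>
          ((hCsub hx).resolve_left (fun h => hsC (h ▸ hx))))
      have hCI : C ∈ I := hfc s hsSB C hC hsC (by rwa [union_singleton])
      -- rank computations
      have hsX : s ∉ B ∪ F := by
        rintro (h | h)
        · exact hsSB.2 h
        · exact hsF h
      have hCdiff : M.Indep (C \ {s}) := hC.2 _ (sdiff_singleton_ssubset.2 hsC)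
      have hXint : (B ∪ F) ∩ C = C \ {s} := by
        ext x
        constructor
        · rintro ⟨hxX, hxC⟩
          exact ⟨hxC, fun h => hsX (h ▸ hxX)⟩
        · rintro ⟨hxC, hxs⟩
          refine ⟨?_, hxC⟩
          rcases hCsub hxC with h | h
          · exact absurd h hxs
          · exact Or.inl h
      have hBXC : M.IsBasis B ((B ∪ F) ∪ C) := by
        refine hB.isBasis_subset (subset_union_left.trans subset_union_left) ?_
        refine union_subset (union_subset hB.subset ?_) ?_
        · exact fun x hx => (hFsub' hx).1
        · exact hCsub.trans (insert_subset hsSB.1 hB.subset)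
      have hBX : M.IsBasis B (B ∪ F) :=
        hB.isBasis_subset subset_union_left
          (union_subset hB.subset fun x hx => (hFsub' hx).1)
      have hCbasis : M.IsBasis (C \ {s}) C := by
        rw [hCdiff.isBasis_iff_forall_insert_dep diff_subset]
        intro e he
        have hes : e = s := by
          rcases he with ⟨heC, heD⟩
          by_contra h
          exact heD ⟨heC, h⟩
        subst hes
        rw [insert_diff_singleton, insert_eq_of_mem hsC]
        exact hC.1
      have hpair : M.ModularPairSets (B ∪ F) C := by
        unfold Matroid.ModularPairSets
        rw [hXint, rk'_eq_of_indep hCdiff, rk'_eq_of_basis hBXC,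
          rk'_eq_of_basis hBX, rk'_eq_of_basis hCbasis]
        omega
      have hunion : (B ∪ F) ∪ C ∈ I := hI.2.2.2 _ _ hXI hCI hpair
      refine hI.2.1 _ _ ?_ hunion
      rw [union_insert]
      exact insert_subset (Or.inr hsC) subset_union_left
    have := key (S \ B) Subset.rfl
    rwa [union_diff_cancel hB.subset] at this
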